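/- Let c : ℕ → ℕ → ℝ be a doubly indexed family of nonnegative real numbers which is uniformly bounded (there is C with c k n ≤ C for all k, n), such that for each fixed k the sequence n ↦ c k n converges to 0, and such that the sequence n ↦ sup_k c k n converges to some θ > 0. Then there exist strictly increasing functions σ, τ : ℕ → ℕ such that the sequence m ↦ c (σ m) (τ m) converges to θ. -/

import Mathlib

open Filter

/-- Lemma 2.4(b), abstract form: if `c k n ≥ 0` is uniformly bounded, each row `n ↦ c k n`
tends to `0`, and `n ↦ sup_k c k n` tends to `θ > 0`, then there are strictly increasing
`σ, τ : ℕ → ℕ` with `c (σ m) (τ m) → θ`. -/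
theorem stmt8 (c : ℕ → ℕ → ℝ) (hnonneg : ∀ k n, 0 ≤ c k n)
    (C : ℝ) (hbdd : ∀ k n, c k n ≤ C)
    (hnull : ∀ k, Tendsto (fun n => c k n) atTop (nhds 0))
    (θ : ℝ) (hθ : 0 < θ)
    (hsup : Tendsto (fun n => ⨆ k, c k n) atTop (nhds θ)) :
    ∃ σ τ : ℕ → ℕ, StrictMono σ ∧ StrictMono τ ∧
      Tendsto (fun m => c (σ m) (τ m)) atTop (nhds θ) := by
  have hbdda : ∀ n, BddAbove (Set.range fun k => c k n) := by
    intro n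
    exact ⟨C, by rintro x ⟨k, rfl⟩; exact hbdd k n⟩
  -- Key step lemma
  have key : ∀ K N : ℕ, ∀ ε : ℝ, 0 < ε →
      ∃ k n : ℕ, K < k ∧ N < n ∧ |c k n - θ| < ε := by
    intro K N ε hε
    set ε' : ℝ := min ε (θ / 2) with hε'def
    have hε' : 0 < ε' := lt_min hε (by linarith)
    have hε'le : ε' ≤ ε := min_le_left _ _
    have hε'le2 : ε' ≤ θ / 2 := min_le_right _ _
    -- eventually properties
    have h1 : ∀ᶠ n in atTop, |(⨆ k, c k n) - θ| < ε' / 2 := by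
      have := Metric.tendsto_atTop.mp hsup (ε' / 2) (by linarith)
      obtain ⟨M, hM⟩ := this
      filter_upwards [eventually_ge_atTop M] with n hn
      simpa [Real.dist_eq] using hM n hn
    have h2 : ∀ᶠ n in atTop, ∀ k ∈ Finset.range (K + 1), c k n < θ - ε' := by
      rw [eventually_all_finset]
      intro k _
      have := Metric.tendsto_atTop.mp (hnull k) (θ - ε') (by linarith)
      obtain ⟨M, hM⟩ := this
      filter_upwards [eventually_ge_atTop M] with n hn
      have := hM n hn
      rw [Real.dist_eq, sub_zero] at this
      calc c k n ≤ |c k n| := le_abs_self _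
        _ < θ - ε' := this
    obtain ⟨n, hn1, hn2, hnN⟩ := (h1.and (h2.and (eventually_gt_atTop N))).exists
    -- supremum near θ
    have hsub : θ - ε' < ⨆ k, c k n := by
      have := abs_lt.mp hn1
      linarith [this.1]
    have hsup_ub : (⨆ k, c k n) < θ + ε' := by
      have := abs_lt.mp hn1
      linarith [this.2]
    obtain ⟨k, hk⟩ := exists_lt_of_lt_ciSup hsub
    have hkK : K < k := by
      by_contra h
      push_neg at h
      have := hn2 k (Finset.mem_range.mpr (Nat.lt_succ_of_le h))
      linarith
    refine ⟨k, n, hkK, hnN, ?_⟩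
    have hle : c k n ≤ ⨆ k, c k n := le_ciSup (hbdda n) k
    rw [abs_lt]
    constructor <;> [linarith; linarith]
  choose k! n! hk! hn! hc! using key
  have pos : ∀ m : ℕ, (0 : ℝ) < 1 / (m + 1) := by
    intro m
    positivity
  have pos2 : ∀ m : ℕ, (0 : ℝ) < 1 / ((m : ℝ) + 2) := by
    intro m
    positivity
  set g : ℕ → ℕ × ℕ :=
    fun m => Nat.rec (⟨k! 0 0 1 one_pos, n! 0 0 1 one_pos⟩)
      (fun m p => ⟨k! p.1 p.2 (1 / ((m : ℝ) + 2)) (pos2 m),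
        n! p.1 p.2 (1 / ((m : ℝ) + 2)) (pos2 m)⟩) m with hg
  refine ⟨fun m => (g m).1, fun m => (g m).2, ?_, ?_, ?_⟩
  · apply strictMono_nat_of_lt_succ
    intro m
    exact hk! _ _ _ _
  · apply strictMono_nat_of_lt_succ
    intro m
    exact hn! _ _ _ _
  · have hest : ∀ m : ℕ, |c (g m).1 (g m).2 - θ| < 1 / (m + 1) := by
      intro m
      cases m with
      | zero => exact lt_of_lt_of_eq (hc! 0 0 1 one_pos) (by norm_num)
      | succ m =>
        have := hc! (g m).1 (g m).2 (1 / ((m : ℝ) + 2)) (pos2 m)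
        have hcast : (1 : ℝ) / ((m : ℝ) + 2) = 1 / ((m + 1 : ℕ) + 1) := by
          push_cast; ring
        exact lt_of_lt_of_eq this hcast
    rw [tendsto_iff_dist_tendsto_zero]
    apply squeeze_zero (fun m => dist_nonneg)
      (fun m => le_of_lt (by rw [Real.dist_eq]; exact hest m))
    exact tendsto_one_div_add_atTop_nhds_zero_nat
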